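/- arXiv:1704.03772 — 4 statements merged into one kernel-verified Lean document; each statement's English description precedes it below -/
import Mathlib

section
/- Let κ > ℵ₀ be a regular cardinal and f : 𝒫(B) × 𝒫(A) → 𝒫(B) a monotone map that is κ-continuous in each variable. Then the map g : 𝒫(A) → 𝒫(B) sending X to the greatest fixed point of Z ↦ f(Z, X) is κ-continuous, i.e., g(X) = ⋃ { g(X') : X' ⊆ X, card(X') < κ } for all X ⊆ A. -/
open Set

universe u v

/-- A family of subsets is κ-directed if every subfamily of cardinality < κ
has an upper bound in the family. -/
def KDirected {A : Type u} (κ : Cardinal.{u}) (I : Set (Set A)) : Prop :=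
  ∀ J ⊆ I, Cardinal.mk ↥J < κ → ∃ U ∈ I, ∀ V ∈ J, V ⊆ U

/-- A map between powersets is κ-continuous if it preserves unions of κ-directed families. -/
def KCont {A B : Type u} (κ : Cardinal.{u}) (f : Set A → Set B) : Prop :=
  ∀ I : Set (Set A), KDirected κ I → f (⋃₀ I) = ⋃ S ∈ I, f S

lemma stmt7_small_kdir {A : Type u} {κ : Cardinal.{u}} (hκ : κ.IsRegular) (S : Set A) :
    KDirected κ {T | T ⊆ S ∧ Cardinal.mk ↥T < κ} := by
  intro J hJ hJcard
  refine ⟨⋃₀ J, ⟨?_, ?_⟩, fun V hV => subset_sUnion_of_mem hV⟩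
  · exact sUnion_subset fun V hV => (hJ hV).1
  · rw [sUnion_eq_iUnion]
    rw [Cardinal.card_iUnion_lt_iff_forall_of_isRegular hκ hJcard]
    exact fun V => (hJ V.2).2

lemma stmt7_small_sUnion {A : Type u} {κ : Cardinal.{u}} (hκ : κ.IsRegular) (S : Set A) :
    ⋃₀ {T | T ⊆ S ∧ Cardinal.mk ↥T < κ} = S := by
  apply subset_antisymm
  · exact sUnion_subset fun T hT => hT.1
  · intro a ha
    exact ⟨{a}, ⟨singleton_subset_iff.2 ha,
      by simpa using (Cardinal.one_lt_aleph0.trans_le hκ.aleph0_le)⟩, rfl⟩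

theorem stmt7 {A B : Type u} (κ : Cardinal.{u}) (hκ : κ.IsRegular)
    (haleph : Cardinal.aleph0 < κ)
    (f : Set B → Set A → Set B)
    (hmono : ∀ Z Z' X X', Z ⊆ Z' → X ⊆ X' → f Z X ⊆ f Z' X')
    (hc1 : ∀ X, KCont κ (fun Z => f Z X))
    (hc2 : ∀ Z, KCont κ (fun X => f Z X)) :
    ∀ X : Set A,
      ⋃₀ {Z : Set B | Z ⊆ f Z X} =
        ⋃ X' ∈ {X' : Set A | X' ⊆ X ∧ Cardinal.mk ↥X' < κ},
          ⋃₀ {Z : Set B | Z ⊆ f Z X'} := by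
  intro X
  apply subset_antisymm
  · -- hard direction
    rintro b ⟨Z, hZ, hbZ⟩
    simp only [mem_setOf_eq] at hZ
    -- step: every element of Z is in f Z' X' for small Z' ⊆ Z, X' ⊆ X
    have hstep : ∀ b ∈ Z, ∃ Z' X', (Z' ⊆ Z ∧ Cardinal.mk ↥Z' < κ) ∧
        (X' ⊆ X ∧ Cardinal.mk ↥X' < κ) ∧ b ∈ f Z' X' := by
      intro c hc
      have h1 : f Z X = ⋃ Z' ∈ {T | T ⊆ Z ∧ Cardinal.mk ↥T < κ}, f Z' X := by
        conv_lhs => rw [← stmt7_small_sUnion hκ Z]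
        exact hc1 X _ (stmt7_small_kdir hκ Z)
      have hc' := hZ hc
      rw [h1] at hc'
      simp only [mem_iUnion, mem_setOf_eq] at hc'
      obtain ⟨Z', hZ', hcZ'⟩ := hc'
      have h2 : f Z' X = ⋃ X' ∈ {T | T ⊆ X ∧ Cardinal.mk ↥T < κ}, f Z' X' := by
        conv_lhs => rw [← stmt7_small_sUnion hκ X]
        exact hc2 Z' _ (stmt7_small_kdir hκ X)
      rw [h2] at hcZ'
      simp only [mem_iUnion, mem_setOf_eq] at hcZ'
      obtain ⟨X', hX', hcX'⟩ := hcZ'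
      exact ⟨Z', X', hZ', hX', hcX'⟩
    choose zc xc h1 h2 using hstep
    -- iterate
    let R : ℕ → Set B × Set A := fun n => Nat.rec ({b}, (∅ : Set A))
      (fun _ p => (p.1 ∪ ⋃ (c) (h : c ∈ Z ∧ c ∈ p.1), zc c h.1,
                   p.2 ∪ ⋃ (c) (h : c ∈ Z ∧ c ∈ p.1), xc c h.1)) n
    have hsub : ∀ n, (R n).1 ⊆ Z ∧ Cardinal.mk ↥(R n).1 < κ ∧
        (R n).2 ⊆ X ∧ Cardinal.mk ↥(R n).2 < κ := by
      intro n
      induction n with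
      | zero =>
        refine ⟨singleton_subset_iff.2 hbZ, ?_, empty_subset _, ?_⟩
        · have e : ((R 0).1 : Set B) = {b} := rfl
          rw [e, Cardinal.mk_singleton]
          exact Cardinal.one_lt_aleph0.trans haleph
        · have e : ((R 0).2 : Set A) = ∅ := rfl
          rw [e, Cardinal.mk_emptyCollection]
          exact Cardinal.aleph0_pos.trans haleph
      | succ n ih =>
        obtain ⟨hz, hzc, hx, hxc⟩ := ih
        have hcard : ∀ {C : Type u} (t : ∀ c ∈ Z, Set C)
            (ht : ∀ c (h : c ∈ Z), Cardinal.mk ↥(t c h) < κ),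
            Cardinal.mk ↥(⋃ (c) (h : c ∈ Z ∧ c ∈ (R n).1), t c h.1) < κ := by
          intro C t ht
          have : (⋃ (c) (h : c ∈ Z ∧ c ∈ (R n).1), t c h.1) =
              ⋃ (c : B) (h : c ∈ {c | c ∈ Z ∧ c ∈ (R n).1}), t c h.1 := rfl
          rw [this, Cardinal.card_biUnion_lt_iff_forall_of_isRegular hκ ?hs]
          · exact fun c h => ht c h.1
          case hs =>
            refine lt_of_le_of_lt (Cardinal.mk_le_mk_of_subset ?_) hzc
            exact fun c h => h.2
        constructor
        · refine union_subset hz (iUnion₂_subset fun c h => (h1 c h.1).1)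
        refine ⟨?_, union_subset hx (iUnion₂_subset fun c h => (h2 c h.1).1.1), ?_⟩
        · rw [show ((R (n+1)).1 : Set B) = (R n).1 ∪ ⋃ (c) (h : c ∈ Z ∧ c ∈ (R n).1), zc c h.1
            from rfl]
          refine lt_of_le_of_lt (Cardinal.mk_union_le _ _) ?_
          exact Cardinal.add_lt_of_lt hκ.aleph0_le hzc (hcard (fun c h => zc c h) fun c h => (h1 c h).2)
        · rw [show ((R (n+1)).2 : Set A) = (R n).2 ∪ ⋃ (c) (h : c ∈ Z ∧ c ∈ (R n).1), xc c h.1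
            from rfl]
          refine lt_of_le_of_lt (Cardinal.mk_union_le _ _) ?_
          exact Cardinal.add_lt_of_lt hκ.aleph0_le hxc (hcard (fun c h => xc c h) fun c h => (h2 c h).1.2)
    set Zω : Set B := ⋃ n, (R n).1 with hZω
    set Xω : Set A := ⋃ n, (R n).2 with hXω
    have hZωZ : Zω ⊆ Z := iUnion_subset fun n => (hsub n).1
    have hXωX : Xω ⊆ X := iUnion_subset fun n => (hsub n).2.2.1
    have hXωcard : Cardinal.mk ↥Xω < κ := by
      have e : Xω = ⋃ (n : ULift.{u} ℕ), (R n.down).2 := by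
        rw [hXω]
        exact (iUnion_congr_of_surjective _ ULift.down_surjective fun n => rfl).symm
      rw [e, Cardinal.card_iUnion_lt_iff_forall_of_isRegular hκ
        (lt_of_le_of_lt Cardinal.mk_le_aleph0 haleph)]
      exact fun n => (hsub n.down).2.2.2
    have hpostfix : Zω ⊆ f Zω Xω := by
      intro c hc
      rw [hZω, mem_iUnion] at hc
      obtain ⟨n, hn⟩ := hc
      have hcZ : c ∈ Z := (hsub n).1 hn
      have hcf : c ∈ f (zc c hcZ) (xc c hcZ) := (h2 c hcZ).2
      refine hmono _ _ _ _ ?_ ?_ hcf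
      · refine subset_trans ?_ (subset_iUnion (fun n => (R n).1) (n+1))
        refine subset_trans ?_ subset_union_right
        exact subset_iUnion₂_of_subset c ⟨hcZ, hn⟩ (by rfl)
      · refine subset_trans ?_ (subset_iUnion (fun n => (R n).2) (n+1))
        refine subset_trans ?_ subset_union_right
        exact subset_iUnion₂_of_subset c ⟨hcZ, hn⟩ (by rfl)
    have hbω : b ∈ Zω := mem_iUnion.2 ⟨0, rfl⟩
    simp only [mem_iUnion, mem_setOf_eq]
    exact ⟨Xω, ⟨hXωX, hXωcard⟩, ⟨Zω, hpostfix, hbω⟩⟩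
  · -- easy direction
    intro b hb
    simp only [mem_iUnion, mem_setOf_eq] at hb
    obtain ⟨X', ⟨hX'X, _⟩, Z, hZ, hbZ⟩ := hb
    exact ⟨Z, fun z hz => hmono Z Z X' X (le_refl _) hX'X (hZ hz), hbZ⟩
end

section
/- Let ψ : 𝒫(A) → 𝒫(A) be monotone, let μ = lfp(ψ) denote its least fixed point, and define φ : 𝒫(A) → 𝒫(A) by φ(S) = (A \ μ) ∪ ψ(S ∩ μ). Then φ is monotone and for every ordinal γ ≥ 1, the iterate φ^γ(∅) equals (A \ μ) ∪ ψ^γ(∅) (i.e., the Heyting implication μ → ψ^γ(∅) in 𝒫(A)). Consequently, the least fixed point of φ is all of A. -/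
open Set

universe u v
/-- Ordinal-indexed iterates of a map on a powerset, starting from ∅,
taking unions at limit stages. -/
noncomputable def iter {A : Type u} (f : Set A → Set A) (o : Ordinal.{v}) : Set A :=
  Ordinal.limitRecOn o ∅ (fun _ ih => f ih)
    (fun o _ ih => ⋃ (b : Ordinal.{v}) (h : b < o), ih b h)

theorem iter_zero {A : Type u} (f : Set A → Set A) : iter f (0 : Ordinal.{v}) = ∅ :=
  Ordinal.limitRecOn_zero ..

theorem iter_succ {A : Type u} (f : Set A → Set A) (o : Ordinal.{v}) :
    iter f (o + 1) = f (iter f o) :=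
  Ordinal.limitRecOn_add_one ..

theorem iter_limit {A : Type u} (f : Set A → Set A) (o : Ordinal.{v}) (h : Order.IsSuccLimit o) :
    iter f o = ⋃ (b : Ordinal.{v}) (_ : b < o), iter f b :=
  Ordinal.limitRecOn_limit _ _ _ _ h

theorem stmt12 {A : Type u} (ψ : Set A → Set A) (hψ : Monotone ψ)
    (μ : Set A) (hμ : μ = ⋂₀ {S : Set A | ψ S ⊆ S})
    (φ : Set A → Set A) (hφ : ∀ S, φ S = μᶜ ∪ ψ (S ∩ μ)) :
    Monotone φ ∧ (∀ γ : Ordinal.{v}, 1 ≤ γ → iter φ γ = μᶜ ∪ iter ψ γ) ∧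
      ⋂₀ {S : Set A | φ S ⊆ S} = Set.univ := by
  have hμle : ∀ S, ψ S ⊆ S → μ ⊆ S := by
    intro S hS
    rw [hμ]
    exact sInter_subset_of_mem hS
  have hpre : ψ μ ⊆ μ := by
    intro x hx
    rw [hμ]
    exact mem_sInter.mpr fun S hS => hS (hψ (hμle S hS) hx)
  have hsub : ∀ γ : Ordinal.{v}, iter ψ γ ⊆ μ := by
    intro γ
    induction γ using Ordinal.limitRecOn with
    | zero => rw [iter_zero]; exact empty_subset _
    | add_one o ih => rw [iter_succ]; exact (hψ ih).trans hpre
    | limit o ho ih => rw [iter_limit _ _ ho]; exact iUnion₂_subset ih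
  have hmono : Monotone φ := by
    intro S T hST
    rw [hφ, hφ]
    exact union_subset_union_right _ (hψ (inter_subset_inter_left _ hST))
  have key : ∀ γ : Ordinal.{v}, 1 ≤ γ → iter φ γ = μᶜ ∪ iter ψ γ := by
    intro γ
    induction γ using Ordinal.limitRecOn with
    | zero => intro h; exact absurd h (by simp)
    | add_one o ih =>
      intro _
      rcases eq_or_ne o 0 with rfl | ho
      · rw [iter_succ, iter_succ, iter_zero, iter_zero, hφ]
        simp
      · have ho1 : 1 ≤ o := Ordinal.one_le_iff_ne_zero.mpr ho
        rw [iter_succ, iter_succ, ih ho1, hφ]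
        congr 1
        rw [union_inter_distrib_right, compl_inter_self, empty_union,
          inter_eq_left.mpr (hsub o)]
    | limit o ho ih =>
      intro _
      rw [iter_limit _ _ ho, iter_limit _ _ ho]
      apply subset_antisymm
      · refine iUnion₂_subset fun b hb => ?_
        rcases eq_or_ne b 0 with rfl | hb0
        · rw [iter_zero]; exact empty_subset _
        · rw [ih b hb (Ordinal.one_le_iff_ne_zero.mpr hb0)]
          exact union_subset_union_right _ (subset_iUnion₂ (s := fun b (_ : b < o) => iter ψ b) b hb)
      · refine union_subset ?_ (iUnion₂_subset fun b hb => ?_)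
        · have h1 : (1 : Ordinal.{v}) < o := Ordinal.one_lt_of_isSuccLimit ho
          refine subset_trans ?_ (subset_iUnion₂ (s := fun b (_ : b < o) => iter φ b) 1 h1)
          rw [ih 1 h1 le_rfl]
          exact subset_union_left
        · refine subset_trans ?_ (subset_iUnion₂ (s := fun b (_ : b < o) => iter φ b) b hb)
          rcases eq_or_ne b 0 with rfl | hb0
          · rw [iter_zero]; exact empty_subset _
          · rw [ih b hb (Ordinal.one_le_iff_ne_zero.mpr hb0)]
            exact subset_union_right
  refine ⟨hmono, key, ?_⟩
  apply eq_univ_of_univ_subset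
  refine subset_sInter fun S hS => ?_
  rw [mem_setOf_eq, hφ] at hS
  have h1 : μᶜ ⊆ S := subset_union_left.trans hS
  have h2 : ψ (S ∩ μ) ⊆ S := subset_union_right.trans hS
  have h3 : ψ (S ∩ μ) ⊆ S ∩ μ := subset_inter h2 ((hψ inter_subset_right).trans hpre)
  have h4 : μ ⊆ S := (hμle _ h3).trans inter_subset_left
  intro x _
  by_cases hx : x ∈ μ
  exacts [h4 hx, h1 hx]
end

section
/- Fix for each countable limit ordinal β ≠ 0 an ω-chain (β_n)_{n<ω} cofinal in β (i.e., β_n ≤ β_{n+1} < β for all n and sup_n β_n = β). For α ≤ ω₁ define S_α = { (n, δ) : n < ω, δ < α } ⊆ ω × ω₁, and define F : 𝒫(ω × ω₁) → 𝒫(ω × ω₁) by: (n, δ) ∈ F(X) iff either δ = 0, or δ = γ + 1 and (0, γ) ∈ X, or δ is a nonzero limit ordinal and (0, δ_m) ∈ X for all m ≥ n. Then F(S_α) = S_{α+1} for every countable ordinal α, and consequently F^α(∅) = S_α for every α ≤ ω₁. -/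
open Set

universe u v

/-- The least uncountable ordinal. -/
noncomputable def omega1 : Ordinal.{0} := (Cardinal.aleph 1).ord

/-- The set S_α = { (n, δ) : n < ω, δ < α } of the paper's model M_{ω₁}. -/
def Sset (α : Ordinal.{0}) : Set (ℕ × Ordinal.{0}) := {p | p.2 < α}

/-- The semantic action of the formula (ν_z.◇_v x ∧ ◇_h z) ∨ □_v ⊥ on M_{ω₁},
where `c δ` enumerates the chosen cofinal ω-chain in the limit ordinal δ. -/
def Fop (c : Ordinal.{0} → ℕ → Ordinal.{0}) (X : Set (ℕ × Ordinal.{0})) :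
    Set (ℕ × Ordinal.{0}) :=
  {p | p.2 < omega1 ∧ (p.2 = 0 ∨ (∃ γ, p.2 = γ + 1 ∧ (0, γ) ∈ X) ∨
    (Order.IsSuccLimit p.2 ∧ ∀ m ≥ p.1, (0, c p.2 m) ∈ X))}

lemma cmono' (c : Ordinal.{0} → ℕ → Ordinal.{0})
    (hmono : ∀ δ, Order.IsSuccLimit δ → δ < omega1 → ∀ m, c δ m ≤ c δ (m + 1))
    {δ : Ordinal.{0}} (hδ : Order.IsSuccLimit δ) (hδ1 : δ < omega1) :
    ∀ {m k : ℕ}, m ≤ k → c δ m ≤ c δ k := by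
  intro m k h
  induction h with
  | refl => exact le_rfl
  | step h ih => exact le_trans ih (hmono δ hδ hδ1 _)

lemma step_lemma (c : Ordinal.{0} → ℕ → Ordinal.{0})
    (hmono : ∀ δ, Order.IsSuccLimit δ → δ < omega1 → ∀ m, c δ m ≤ c δ (m + 1))
    (hlt : ∀ δ, Order.IsSuccLimit δ → δ < omega1 → ∀ m, c δ m < δ)
    (hcof : ∀ δ, Order.IsSuccLimit δ → δ < omega1 → ∀ γ < δ, ∃ m, γ ≤ c δ m) :
    ∀ α < omega1, Fop c (Sset α) = Sset (α + 1) := by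
  intro α hα
  ext ⟨n, δ⟩
  simp only [Fop, Sset, Set.mem_setOf_eq]
  constructor
  · rintro ⟨hδ1, h0 | ⟨γ, rfl, hγ⟩ | ⟨hlim, hall⟩⟩
    · subst h0
      rw [Ordinal.add_one_eq_succ]
      exact Order.bot_lt_succ α
    · rw [Ordinal.add_one_eq_succ, Ordinal.add_one_eq_succ]
      exact Order.succ_lt_succ hγ
    · -- δ limit, ∀ m ≥ n, c δ m < α. Show δ < α + 1, i.e. δ ≤ α.
      rw [Ordinal.add_one_eq_succ, Order.lt_succ_iff]
      by_contra hcon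
      have hαδ : α < δ := lt_of_not_ge hcon
      obtain ⟨m, hm⟩ := hcof δ hlim hδ1 α hαδ
      have h2 : c δ (max m n) < α := hall (max m n) (le_max_right m n)
      exact absurd (le_trans hm (cmono' c hmono hlim hδ1 (le_max_left m n))) (not_le.mpr h2)
  · intro h
    have hδα : δ ≤ α := Order.lt_succ_iff.mp h
    have hδ1 : δ < omega1 := lt_of_le_of_lt hδα hα
    refine ⟨hδ1, ?_⟩
    rcases Ordinal.zero_or_succ_or_isSuccLimit δ with h0 | ⟨γ, rfl⟩ | hlim
    · exact Or.inl h0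
    · refine Or.inr (Or.inl ⟨γ, by rw [Ordinal.add_one_eq_succ], ?_⟩)
      exact lt_of_lt_of_le (Order.lt_succ γ) hδα
    · exact Or.inr (Or.inr ⟨hlim, fun m _ => lt_of_lt_of_le (hlt δ hlim hδ1 m) hδα⟩)

theorem stmt14 (c : Ordinal.{0} → ℕ → Ordinal.{0})
    (hmono : ∀ δ, Order.IsSuccLimit δ → δ < omega1 → ∀ m, c δ m ≤ c δ (m + 1))
    (hlt : ∀ δ, Order.IsSuccLimit δ → δ < omega1 → ∀ m, c δ m < δ)
    (hcof : ∀ δ, Order.IsSuccLimit δ → δ < omega1 → ∀ γ < δ, ∃ m, γ ≤ c δ m) :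
    (∀ α < omega1, Fop c (Sset α) = Sset (α + 1)) ∧
      (∀ α ≤ omega1, iter (Fop c) α = Sset α) := by
  have hstep := step_lemma c hmono hlt hcof
  refine ⟨hstep, ?_⟩
  intro α
  induction α using Ordinal.induction with
  | h α ih =>
    intro hα
    rcases Ordinal.zero_or_succ_or_isSuccLimit α with h0 | ⟨β, rfl⟩ | hlim
    · subst h0
      simp [iter, Ordinal.limitRecOn_zero, Sset]
    · have hβ : β < omega1 := lt_of_lt_of_le (Order.lt_succ β) hα
      have h1 : iter (Fop c) (Order.succ β) = Fop c (iter (Fop c) β) := by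
        simp [iter, Ordinal.limitRecOn_succ]
      have h2 := hstep β hβ
      rw [Ordinal.add_one_eq_succ] at h2
      rw [h1, ih β (Order.lt_succ β) hβ.le]
      exact h2
    · have h1 : iter (Fop c) α = ⋃ (b : Ordinal.{0}) (_ : b < α), iter (Fop c) b := by
        simp [iter, Ordinal.limitRecOn_limit _ _ _ _ hlim]
      rw [h1]
      ext p
      simp only [Set.mem_iUnion]
      constructor
      · rintro ⟨b, hb, hp⟩
        rw [ih b hb (hb.le.trans hα)] at hp
        exact lt_of_lt_of_le hp hb.le
      · intro hp
        refine ⟨p.2 + 1, ?_, ?_⟩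
        · rw [Ordinal.add_one_eq_succ]; exact hlim.succ_lt hp
        · rw [ih (p.2 + 1) (by rw [Ordinal.add_one_eq_succ]; exact hlim.succ_lt hp)
            ((le_of_lt (by rw [Ordinal.add_one_eq_succ]; exact hlim.succ_lt hp)).trans hα)]
          rw [Ordinal.add_one_eq_succ]; exact Order.lt_succ p.2
end

section
/- Let κ > ℵ₀ be regular, let f : 𝒫(B) × 𝒫(A) → 𝒫(B) be monotone and κ-continuous in each variable, let g(X) = gfp(Z ↦ f(Z,X)), and suppose b ∈ g(X). Then there exist sequences (Z_n)_{n≥0} of κ-small subsets of B and (X_n)_{n≥1} of κ-small subsets of X with Z₀ = {b} and Z_n ⊆ f(Z_{n+1}, X_{n+1}) for all n; setting Z_ω = ⋃_n Z_n and X_ω = ⋃_{n≥1} X_n, both are κ-small, Z_ω ⊆ f(Z_ω, X_ω), and hence b ∈ gfp(Z ↦ f(Z, X_ω)) with X_ω ⊆ X κ-small. -/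
open Set

universe u v

/-- The family of κ-small subsets of W is κ-directed. -/
lemma kdirected_small {A : Type u} (κ : Cardinal.{u}) (hκ : κ.IsRegular) (W : Set A) :
    KDirected κ {Z : Set A | Z ⊆ W ∧ Cardinal.mk ↥Z < κ} := by
  intro J hJ hJcard
  refine ⟨⋃₀ J, ⟨?_, ?_⟩, fun V hV => subset_sUnion_of_mem hV⟩
  · exact sUnion_subset fun V hV => (hJ hV).1
  · refine lt_of_le_of_lt (Cardinal.mk_sUnion_le _) ?_
    apply Cardinal.mul_lt_of_lt hκ.aleph0_le hJcard
    exact Cardinal.iSup_lt_of_isRegular hκ hJcard fun i => (hJ i.2).2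

lemma sUnion_small {A : Type u} (κ : Cardinal.{u}) (haleph : Cardinal.aleph0 < κ) (W : Set A) :
    ⋃₀ {Z : Set A | Z ⊆ W ∧ Cardinal.mk ↥Z < κ} = W := by
  apply subset_antisymm (sUnion_subset fun V hV => hV.1)
  intro a ha
  exact ⟨{a}, ⟨singleton_subset_iff.2 ha, by
    simpa using lt_trans Cardinal.one_lt_aleph0 haleph⟩, rfl⟩

theorem stmt16 {A B : Type u} (κ : Cardinal.{u}) (hκ : κ.IsRegular)
    (haleph : Cardinal.aleph0 < κ)
    (f : Set B → Set A → Set B)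
    (hmono : ∀ Z Z' X X', Z ⊆ Z' → X ⊆ X' → f Z X ⊆ f Z' X')
    (hc1 : ∀ X, KCont κ (fun Z => f Z X))
    (hc2 : ∀ Z, KCont κ (fun X => f Z X))
    (X : Set A) (b : B) (hb : b ∈ ⋃₀ {Z : Set B | Z ⊆ f Z X}) :
    ∃ (Z : ℕ → Set B) (Xs : ℕ → Set A),
      Z 0 = {b} ∧
      (∀ n, Cardinal.mk ↥(Z n) < κ) ∧
      (∀ n ≥ 1, Xs n ⊆ X ∧ Cardinal.mk ↥(Xs n) < κ) ∧
      (∀ n, Z n ⊆ f (Z (n + 1)) (Xs (n + 1))) ∧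
      Cardinal.mk ↥(⋃ n, Z n) < κ ∧
      Cardinal.mk ↥(⋃ n ≥ 1, Xs n) < κ ∧
      (⋃ n ≥ 1, Xs n) ⊆ X ∧
      (⋃ n, Z n) ⊆ f (⋃ n, Z n) (⋃ n ≥ 1, Xs n) ∧
      b ∈ ⋃₀ {Z' : Set B | Z' ⊆ f Z' (⋃ n ≥ 1, Xs n)} := by
  classical
  set W : Set B := ⋃₀ {Z : Set B | Z ⊆ f Z X} with hW
  have hWfix : W ⊆ f W X := by
    apply sUnion_subset
    intro Z hZ
    exact subset_trans hZ (hmono _ _ _ _ (subset_sUnion_of_mem hZ) subset_rfl)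
  have hsingle : ∀ x : B, Cardinal.mk ↥({x} : Set B) < κ := fun x => by
    simpa using lt_trans Cardinal.one_lt_aleph0 haleph
  -- key step: shrink
  have key : ∀ S : Set B, Cardinal.mk ↥S < κ → S ⊆ W →
      ∃ Z' X', Z' ⊆ W ∧ Cardinal.mk ↥Z' < κ ∧ X' ⊆ X ∧ Cardinal.mk ↥X' < κ ∧
        S ⊆ f Z' X' := by
    intro S hScard hSW
    -- S ⊆ f W X, rewrite f W X as union over κ-small Z'
    have h1 : f W X = ⋃ Z' ∈ {Z : Set B | Z ⊆ W ∧ Cardinal.mk ↥Z < κ}, f Z' X := by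
      conv_lhs => rw [← sUnion_small κ haleph W]
      exact hc1 X _ (kdirected_small κ hκ W)
    have hSf : S ⊆ f W X := subset_trans hSW hWfix
    -- for each s ∈ S, choose a κ-small Z' with s ∈ f Z' X
    have hex : ∀ s : S, ∃ Z' : Set B, Z' ⊆ W ∧ Cardinal.mk ↥Z' < κ ∧ (s : B) ∈ f Z' X := by
      intro s
      have := hSf s.2
      rw [h1] at this
      simp only [mem_iUnion, mem_setOf_eq] at this
      obtain ⟨Z', ⟨h1', h2'⟩, h3'⟩ := this
      exact ⟨Z', h1', h2', h3'⟩
    choose g hg1 hg2 hg3 using hex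
    set Z' : Set B := ⋃ s : S, g s with hZ'
    have hZ'W : Z' ⊆ W := iUnion_subset hg1
    have hZ'card : Cardinal.mk ↥Z' < κ := by
      refine lt_of_le_of_lt (Cardinal.mk_iUnion_le _) ?_
      exact Cardinal.mul_lt_of_lt hκ.aleph0_le hScard
        (Cardinal.iSup_lt_of_isRegular hκ hScard hg2)
    have hSZ' : S ⊆ f Z' X := by
      intro s hs
      exact hmono _ _ _ _ (subset_iUnion g ⟨s, hs⟩) subset_rfl (hg3 ⟨s, hs⟩)
    -- now shrink X
    have h2 : f Z' X = ⋃ X' ∈ {Y : Set A | Y ⊆ X ∧ Cardinal.mk ↥Y < κ}, f Z' X' := by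
      conv_lhs => rw [← sUnion_small κ haleph X]
      exact hc2 Z' _ (kdirected_small κ hκ X)
    have hex2 : ∀ s : S, ∃ X' : Set A, X' ⊆ X ∧ Cardinal.mk ↥X' < κ ∧ (s : B) ∈ f Z' X' := by
      intro s
      have := hSZ' s.2
      rw [h2] at this
      simp only [mem_iUnion, mem_setOf_eq] at this
      obtain ⟨X', ⟨h1', h2'⟩, h3'⟩ := this
      exact ⟨X', h1', h2', h3'⟩
    choose g2 hg21 hg22 hg23 using hex2
    refine ⟨Z', ⋃ s : S, g2 s, hZ'W, hZ'card, iUnion_subset hg21, ?_, ?_⟩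
    · refine lt_of_le_of_lt (Cardinal.mk_iUnion_le _) ?_
      exact Cardinal.mul_lt_of_lt hκ.aleph0_le hScard
        (Cardinal.iSup_lt_of_isRegular hκ hScard hg22)
    · intro s hs
      exact hmono _ _ _ _ subset_rfl (subset_iUnion g2 ⟨s, hs⟩) (hg23 ⟨s, hs⟩)
  -- build the sequences by recursion
  have hbW : ({b} : Set B) ⊆ W := singleton_subset_iff.2 hb
  let T := {p : Set B × Set A // p.1 ⊆ W ∧ Cardinal.mk ↥p.1 < κ ∧ p.2 ⊆ X ∧ Cardinal.mk ↥p.2 < κ}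
  let step : T → T := fun p =>
    ⟨((key p.1.1 p.2.2.1 p.2.1).choose, (key p.1.1 p.2.2.1 p.2.1).choose_spec.choose),
      (key p.1.1 p.2.2.1 p.2.1).choose_spec.choose_spec.1,
      (key p.1.1 p.2.2.1 p.2.1).choose_spec.choose_spec.2.1,
      (key p.1.1 p.2.2.1 p.2.1).choose_spec.choose_spec.2.2.1,
      (key p.1.1 p.2.2.1 p.2.1).choose_spec.choose_spec.2.2.2.1⟩
  have hstep : ∀ p : T, p.1.1 ⊆ f (step p).1.1 (step p).1.2 := fun p =>
    (key p.1.1 p.2.2.1 p.2.1).choose_spec.choose_spec.2.2.2.2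
  let F : ℕ → T := fun n => Nat.rec
    (⟨({b}, ∅), hbW, hsingle b, empty_subset X, by
      simpa using hκ.pos⟩ : T)
    (fun _ p => step p) n
  have hF : ∀ n, F (n + 1) = step (F n) := fun n => rfl
  refine ⟨fun n => (F n).1.1, fun n => (F n).1.2, rfl, fun n => (F n).2.2.1,
    fun n _ => ⟨(F n).2.2.2.1, (F n).2.2.2.2⟩, fun n => hstep (F n), ?_, ?_, ?_, ?_, ?_⟩
  · -- κ-smallness of ⋃ Z n
    rw [show (⋃ n, (F n).1.1) = ⋃ i : ULift.{u} ℕ, (F i.down).1.1 from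
      (iUnion_congr_of_surjective _ ULift.down_surjective fun _ => rfl).symm]
    rw [Cardinal.card_iUnion_lt_iff_forall_of_isRegular hκ (by simpa using haleph)]
    exact fun i => (F i.down).2.2.1
  · rw [show (⋃ n ≥ 1, (F n).1.2) = ⋃ i : ULift.{u} ℕ, ⋃ _ : i.down ≥ 1, (F i.down).1.2 from
      (iUnion_congr_of_surjective _ ULift.down_surjective fun _ => rfl).symm]
    rw [Cardinal.card_iUnion_lt_iff_forall_of_isRegular hκ (by simpa using haleph)]
    intro i
    rcases le_or_gt 1 i.down with h | h
    · simpa [h] using (F i.down).2.2.2.2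
    · simp [show ¬ (1 ≤ i.down) from not_le.2 h]
      simpa using lt_trans Cardinal.aleph0_pos haleph
  · exact iUnion₂_subset fun n _ => (F n).2.2.2.1
  · intro x hx
    simp only [mem_iUnion] at hx
    obtain ⟨n, hn⟩ := hx
    have h1 := hstep (F n) hn
    refine hmono _ _ _ _ ?_ ?_ h1
    · exact subset_iUnion (fun n => (F n).1.1) (n + 1)
    · exact subset_iUnion₂_of_subset (n + 1) (by omega) subset_rfl
  · exact ⟨⋃ n, (F n).1.1, by
      intro x hx
      simp only [mem_iUnion] at hx
      obtain ⟨n, hn⟩ := hx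
      exact hmono _ _ _ _ (subset_iUnion (fun n => (F n).1.1) (n + 1))
        (subset_iUnion₂_of_subset (n + 1) (by omega) subset_rfl) (hstep (F n) hn),
      mem_iUnion.2 ⟨0, rfl⟩⟩
end
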